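/- Suppose F is injective and Σ is an F-spanning set for Γ. Then the language over the alphabet Σ × Σ × Σ consisting of all words (x_0,y_0,z_0)(x_1,y_1,z_1)⋯(x_{n−1},y_{n−1},z_{n−1}) such that [x_0⋯x_{n−1}]_F + [y_0⋯y_{n−1}]_F = [z_0⋯z_{n−1}]_F is regular. (Equivalently, the set G of triples (u, v, w) of words over Σ of the same length with [u]_F + [v]_F = [w]_F is a regular subset of (Σ×Σ×Σ)*.) -/

import Mathlib

open Pointwise

/-- `[w]_F`: the base-`F` evaluation of a word `w = x₀x₁⋯x_m`,
namely `x₀ + F x₁ + ⋯ + F^m x_m`, with `[∅]_F = 0`. -/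
def wordVal {Γ : Type*} [AddCommGroup Γ] (F : AddMonoid.End Γ) : List Γ → Γ
  | [] => 0
  | x :: xs => x + F (wordVal F xs)

/-- `Sig` is an `F`-spanning set for `Γ`. -/
def IsSpanningSet {Γ : Type*} [AddCommGroup Γ] (F : AddMonoid.End Γ) (Sig : Set Γ) : Prop :=
  Sig.Finite ∧
  (0 : Γ) ∈ Sig ∧ (∀ x ∈ Sig, -x ∈ Sig) ∧
  (∀ x : Γ, F x ∈ Sig → x ∈ Sig) ∧
  (∀ x : Γ, ∃ w : List Γ, (∀ y ∈ w, y ∈ Sig) ∧ wordVal F w = x) ∧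
  (∀ x₁ ∈ Sig, ∀ x₂ ∈ Sig, ∀ x₃ ∈ Sig, ∀ x₄ ∈ Sig, ∀ x₅ ∈ Sig,
    ∃ t ∈ Sig, ∃ t' ∈ Sig, x₁ + x₂ + x₃ + x₄ + x₅ = t + F t') ∧
  (∀ x₁ ∈ Sig, ∀ x₂ ∈ Sig, ∀ x₃ ∈ Sig,
    (∃ y : Γ, x₁ + x₂ + x₃ = F y) → ∃ t ∈ Sig, x₁ + x₂ + x₃ = F t)

private lemma wordVal_append_singleton {Γ : Type*} [AddCommGroup Γ] (F : AddMonoid.End Γ)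
    (u : List Γ) (x : Γ) :
    wordVal F (u ++ [x]) = wordVal F u + (F ^ u.length) x := by
  induction u with
  | nil => simp [wordVal]
  | cons a u ih =>
      have hp : (F ^ (u.length + 1)) x = F ((F ^ u.length) x) := by
        rw [pow_succ', AddMonoid.End.coe_mul]; rfl
      show a + F (wordVal F (u ++ [x])) = a + F (wordVal F u) + (F ^ (u.length + 1)) x
      rw [ih, map_add, hp, add_assoc]

/-- If `F` is injective and `Σ` is an `F`-spanning set for `Γ`, then
the language over `Σ × Σ × Σ` of triples of words of the same length `(u,v,w)` with
`[u]_F + [v]_F = [w]_F` is regular. -/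
theorem add_wordVal_lang_regular {Γ : Type*} [AddCommGroup Γ] (F : AddMonoid.End Γ)
    (hF : Function.Injective ⇑F) (Sig : Set Γ) (hSig : IsSpanningSet F Sig) :
    Language.IsRegular {w : List (↥Sig × ↥Sig × ↥Sig) |
      wordVal F (w.map fun p => (p.1 : Γ)) + wordVal F (w.map fun p => (p.2.1 : Γ)) =
        wordVal F (w.map fun p => (p.2.2 : Γ))} := by
  classical
  obtain ⟨hfin, h0, hneg, hdiv, -, h5, -⟩ := hSig
  have hFn : ∀ n : ℕ, Function.Injective ⇑(F ^ n) := by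
    intro n
    rw [AddMonoid.End.coe_pow]
    exact hF.iterate n
  set K : Set Γ := Sig + Sig with hK
  have hKfin : K.Finite := hfin.add hfin
  have h0K : (0 : Γ) ∈ K := ⟨0, h0, 0, h0, by simp⟩
  -- key closure property of carries
  have key : ∀ c ∈ K, ∀ x ∈ Sig, ∀ y ∈ Sig, ∀ z ∈ Sig, ∀ c' : Γ,
      F c' = c + x + y - z → c' ∈ K := by
    rintro c ⟨s₁, hs₁, s₂, hs₂, rfl⟩ x hx y hy z hz c' hc'
    obtain ⟨t, ht, t', ht', htt'⟩ := h5 s₁ hs₁ s₂ hs₂ x hx y hy (-z) (hneg z hz)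
    have h1 : F c' = t + F t' := by rw [hc', ← htt']; beta_reduce; abel
    have h2 : F (c' - t') = t := by rw [map_sub, h1]; abel
    have h3 : c' - t' ∈ Sig := hdiv _ (h2 ▸ ht)
    exact ⟨c' - t', h3, t', ht', sub_add_cancel c' t'⟩
  -- transition on carries
  haveI : Fintype ↥K := hKfin.fintype
  let stepc : ↥K → (↥Sig × ↥Sig × ↥Sig) → Option ↥K := fun c p =>
    if h : ∃ c' : Γ, F c' = (c : Γ) + p.1 + p.2.1 - p.2.2 then
      some ⟨h.choose, key c c.2 p.1 p.1.2 p.2.1 p.2.1.2 p.2.2 p.2.2.2 _ h.choose_spec⟩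
    else none
  let M : DFA (↥Sig × ↥Sig × ↥Sig) (Option ↥K) :=
    { step := fun s p => s.bind (fun c => stepc c p)
      start := some ⟨0, h0K⟩
      accept := {some ⟨0, h0K⟩} }
  -- the defect of a word
  let D : List (↥Sig × ↥Sig × ↥Sig) → Γ := fun w =>
    wordVal F (w.map fun p => (p.1 : Γ)) + wordVal F (w.map fun p => (p.2.1 : Γ)) -
      wordVal F (w.map fun p => (p.2.2 : Γ))
  have hDstep : ∀ w p, D (w ++ [p]) = D w + (F ^ w.length) ((p.1 : Γ) + p.2.1 - p.2.2) := by
    intro w p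
    simp only [D, List.map_append, List.map_cons, List.map_nil, wordVal_append_singleton,
      List.length_map, map_add, map_sub]
    abel
  -- invariant
  have inv : ∀ w : List (↥Sig × ↥Sig × ↥Sig),
      (∀ c : ↥K, M.eval w = some c → (F ^ w.length) (c : Γ) = D w) ∧
      (M.eval w = none → ∀ d : Γ, (F ^ w.length) d ≠ D w) := by
    intro w
    induction w using List.reverseRecOn with
    | nil =>
        constructor
        · intro c hc
          have : (⟨0, h0K⟩ : ↥K) = c := Option.some_injective _ hc
          simp [D, wordVal, ← this]
        · intro h
          exact absurd h (by simp [M, DFA.eval_nil])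
    | append_singleton w p ih =>
        have heval : M.eval (w ++ [p]) = (M.eval w).bind (fun c => stepc c p) := by
          rw [DFA.eval_append_singleton]
        constructor
        · intro c hc
          rw [heval] at hc
          obtain ⟨c₀, hc₀, hstep⟩ := Option.bind_eq_some_iff.mp hc
          have hval : (F ^ w.length) (c₀ : Γ) = D w := ih.1 c₀ hc₀
          simp only [stepc] at hstep
          split_ifs at hstep with h
          · have hcc : h.choose = (c : Γ) := by
              have := Option.some_injective _ hstep
              exact congrArg Subtype.val this
            have hc' : F (c : Γ) = (c₀ : Γ) + p.1 + p.2.1 - p.2.2 := hcc ▸ h.choose_spec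
            have hp : (F ^ (w.length + 1)) (c : Γ) = (F ^ w.length) (F (c : Γ)) := by
              rw [pow_succ, AddMonoid.End.coe_mul]; rfl
            rw [hDstep, List.length_append, List.length_singleton, hp, hc']
            simp only [map_sub, map_add, hval]
            abel
        · intro hnone d hd
          rw [heval] at hnone
          have hp : (F ^ (w.length + 1)) d = (F ^ w.length) (F d) := by
            rw [pow_succ, AddMonoid.End.coe_mul]; rfl
          rw [hDstep, List.length_append, List.length_singleton, hp] at hd
          rcases hw : M.eval w with _ | c₀
          · refine ih.2 hw (F d - ((p.1 : Γ) + p.2.1 - p.2.2)) ?_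
            rw [map_sub, hd]
            abel
          · rw [hw] at hnone
            simp only [Option.bind_some, stepc] at hnone
            split_ifs at hnone with h
            exact h ⟨d, by
              have hval : (F ^ w.length) (c₀ : Γ) = D w := ih.1 c₀ hw
              refine hFn w.length ?_
              rw [hd]
              simp only [map_sub, map_add, hval]
              abel⟩
  -- acceptance characterisation
  have haccepts : M.accepts = {w : List (↥Sig × ↥Sig × ↥Sig) |
      wordVal F (w.map fun p => (p.1 : Γ)) + wordVal F (w.map fun p => (p.2.1 : Γ)) =
        wordVal F (w.map fun p => (p.2.2 : Γ))} := by
    ext w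
    rw [DFA.mem_accepts]
    have hDiff : (wordVal F (w.map fun p => (p.1 : Γ)) +
        wordVal F (w.map fun p => (p.2.1 : Γ)) =
        wordVal F (w.map fun p => (p.2.2 : Γ))) ↔ D w = 0 := by
      constructor
      · intro h; simp only [D, h]; abel_nf
      · intro h; have := sub_eq_zero.mp h; exact this
    constructor
    · intro hacc
      have hacc' : M.eval w = some ⟨0, h0K⟩ := hacc
      have := inv w |>.1 ⟨0, h0K⟩ hacc'
      simp only [map_zero] at this
      exact hDiff.mpr this.symm
    · intro hmem
      have hD0 : D w = 0 := hDiff.mp hmem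
      rcases hw : M.eval w with _ | c
      · exact absurd (by rw [map_zero, hD0]) ((inv w).2 hw 0)
      · have hc : (F ^ w.length) (c : Γ) = D w := (inv w).1 c hw
        have hc0 : (c : Γ) = 0 := hFn w.length (by rw [hc, hD0, map_zero])
        have hceq : some c = some (⟨0, h0K⟩ : ↥K) := by
          rw [Option.some_inj]; exact Subtype.ext hc0
        exact hceq
  -- transport to a `Type 0` state space
  let n := Fintype.card (Option ↥K)
  let e : Option ↥K ≃ Fin n := Fintype.equivFin _
  exact ⟨Fin n, inferInstance, M.reindex e, by rw [DFA.accepts_reindex, haccepts]⟩
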